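/- Let T > 0, α ∈ (0,1) and λ > 0. There exists a constant C = C(α,λ,T) > 0 such that for every positive integer N with δ = T/N, one has ∫_0^T ∫_0^{t_r} (u − t_u)^λ (r−u)^{−α−1} du dr ≤ C δ^{λ−α}. -/

import Mathlib

open MeasureTheory intervalIntegral Real Set

/-- The largest grid point `δ⌊u/δ⌋` of the uniform partition with mesh `δ` not exceeding `u`. -/
noncomputable def tgrid (δ u : ℝ) : ℝ := δ * (⌊u / δ⌋ : ℤ)

lemma tgrid_le {δ : ℝ} (hδ : 0 < δ) (u : ℝ) : tgrid δ u ≤ u := by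
  have h := Int.floor_le (u / δ)
  have h2 : δ * (⌊u / δ⌋ : ℤ) ≤ δ * (u / δ) := by
    exact mul_le_mul_of_nonneg_left h hδ.le
  have h3 : δ * (u / δ) = u := by field_simp
  unfold tgrid; linarith

lemma sub_tgrid_le {δ : ℝ} (hδ : 0 < δ) (u : ℝ) : u - tgrid δ u ≤ δ := by
  have h : u / δ < (⌊u / δ⌋ : ℤ) + 1 := Int.lt_floor_add_one _
  have h2 : u < ((⌊u / δ⌋ : ℤ) + 1) * δ := by
    rw [← div_lt_iff₀ hδ]; exact h
  unfold tgrid; nlinarith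

lemma tgrid_nonneg {δ u : ℝ} (hδ : 0 < δ) (hu : 0 ≤ u) : 0 ≤ tgrid δ u :=
  mul_nonneg hδ.le (by exact_mod_cast Int.floor_nonneg.2 (div_nonneg hu hδ.le))

lemma tgrid_eq {δ : ℝ} (hδ : 0 < δ) (n : ℕ) {r : ℝ} (h1 : (n : ℝ) * δ ≤ r)
    (h2 : r < ((n : ℝ) + 1) * δ) : tgrid δ r = (n : ℝ) * δ := by
  unfold tgrid
  have hfl : ⌊r / δ⌋ = (n : ℤ) := by
    rw [Int.floor_eq_iff]
    constructor
    · rw [le_div_iff₀ hδ]; exact_mod_cast h1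
    · rw [div_lt_iff₀ hδ]; push_cast; exact h2
  rw [hfl]; push_cast; ring

lemma inner_bound {α lam δ r : ℝ} (hα0 : 0 < α) (hlam : 0 < lam)
    (hδ : 0 < δ) (hr0 : 0 ≤ r) (hlt : tgrid δ r < r) :
    (∫ u in (0:ℝ)..tgrid δ r, (u - tgrid δ u) ^ lam * (r - u) ^ (-α - 1))
      ≤ δ ^ lam * (r - tgrid δ r) ^ (-α) / α := by
  set t := tgrid δ r with ht
  have ht0 : 0 ≤ t := tgrid_nonneg hδ hr0
  have hRHS0 : 0 ≤ δ ^ lam * (r - t) ^ (-α) / α :=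
    div_nonneg (mul_nonneg (rpow_nonneg hδ.le _) (rpow_nonneg (by linarith) _)) hα0.le
  by_cases hint : IntervalIntegrable
      (fun u => (u - tgrid δ u) ^ lam * (r - u) ^ (-α - 1)) volume 0 t
  · have hcont : ContinuousOn (fun u : ℝ => δ ^ lam * (r - u) ^ (-α - 1)) (uIcc 0 t) := by
      apply ContinuousOn.mul continuousOn_const
      apply ContinuousOn.rpow_const
      · exact (continuous_const.sub continuous_id).continuousOn
      · intro x hx
        rw [uIcc_of_le ht0] at hx
        exact Or.inl (by nlinarith [hx.2])
    have hgint := hcont.intervalIntegrable (μ := volume)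
    have hmono := integral_mono_on ht0 hint hgint (fun u hu => by
      have h1 : 0 ≤ u - tgrid δ u := sub_nonneg.2 (tgrid_le hδ u)
      have h2 : u - tgrid δ u ≤ δ := sub_tgrid_le hδ u
      have h3 : (0:ℝ) ≤ (r - u) ^ (-α - 1) := rpow_nonneg (by linarith [hu.2]) _
      exact mul_le_mul_of_nonneg_right (rpow_le_rpow h1 h2 hlam.le) h3)
    refine hmono.trans ?_
    rw [intervalIntegral.integral_const_mul]
    have hcomp : (∫ u in (0:ℝ)..t, (r - u) ^ (-α - 1))
        = ((r - t) ^ (-α) - r ^ (-α)) / α := by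
      have hcl := intervalIntegral.integral_comp_sub_left (a := (0:ℝ)) (b := t)
        (fun x : ℝ => x ^ (-α - 1)) r
      rw [hcl, integral_rpow (Or.inr ⟨by linarith, notMem_uIcc_of_lt (by linarith) (by linarith)⟩)]
      have hne : -α - 1 + 1 = -α := by ring
      rw [hne]
      rw [div_neg, ← neg_div, neg_sub, sub_zero]
    rw [hcomp]
    have hr' : 0 ≤ r ^ (-α) := rpow_nonneg hr0 _
    have hd : ((r - t) ^ (-α) - r ^ (-α)) / α ≤ (r - t) ^ (-α) / α := by
      gcongr
      linarith
    calc δ ^ lam * (((r - t) ^ (-α) - r ^ (-α)) / α)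
        ≤ δ ^ lam * ((r - t) ^ (-α) / α) :=
          mul_le_mul_of_nonneg_left hd (rpow_nonneg hδ.le _)
      _ = δ ^ lam * (r - t) ^ (-α) / α := by ring
  · rw [intervalIntegral.integral_undef hint]
    exact hRHS0

lemma piece {α δ : ℝ} (hα0 : 0 < α) (hα1 : α < 1) (hδ : 0 < δ) (n : ℕ) :
    IntervalIntegrable (fun r => (r - tgrid δ r) ^ (-α)) volume ((n:ℝ)*δ) (((n:ℝ)+1)*δ) ∧
    (∫ r in ((n:ℝ)*δ)..(((n:ℝ)+1)*δ), (r - tgrid δ r) ^ (-α)) = δ ^ (1-α) / (1-α) := by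
  have hle : (n:ℝ)*δ ≤ ((n:ℝ)+1)*δ := by nlinarith [hδ.le, Nat.cast_nonneg (α := ℝ) n]
  -- a.e. statement
  have h1 : ∀ᵐ x ∂(volume : Measure ℝ), x ≠ ((n:ℝ)+1)*δ := by
    refine ae_iff.2 ?_
    have : {x : ℝ | ¬ x ≠ ((n:ℝ)+1)*δ} = {((n:ℝ)+1)*δ} := by ext x; simp
    rw [this]; exact Real.volume_singleton
  have hae : ∀ᵐ x ∂(volume : Measure ℝ), x ∈ Ioc ((n:ℝ)*δ) (((n:ℝ)+1)*δ) →
      (x - tgrid δ x) ^ (-α) = (x - (n:ℝ)*δ) ^ (-α) := by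
    filter_upwards [h1] with x hne hx
    rw [tgrid_eq hδ n hx.1.le (lt_of_le_of_ne hx.2 hne)]
  -- integrability of the model function
  have h0 : IntervalIntegrable (fun x : ℝ => x ^ (-α)) volume 0 δ :=
    intervalIntegral.intervalIntegrable_rpow' (by linarith)
  have hmodel : IntervalIntegrable (fun x : ℝ => (x - (n:ℝ)*δ) ^ (-α)) volume
      ((n:ℝ)*δ) (((n:ℝ)+1)*δ) := by
    have h2 := h0.comp_sub_right ((n:ℝ)*δ)
    have e1 : (0:ℝ) + (n:ℝ)*δ = (n:ℝ)*δ := by ring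
    have e2 : δ + (n:ℝ)*δ = ((n:ℝ)+1)*δ := by ring
    rwa [e1, e2] at h2
  constructor
  · rw [intervalIntegrable_iff_integrableOn_Ioc_of_le hle] at hmodel ⊢
    exact hmodel.congr ((ae_restrict_iff' measurableSet_Ioc).2
      (by filter_upwards [hae] with x h hx; exact (h hx).symm))
  · have hcongr : (∫ r in ((n:ℝ)*δ)..(((n:ℝ)+1)*δ), (r - tgrid δ r) ^ (-α))
        = ∫ r in ((n:ℝ)*δ)..(((n:ℝ)+1)*δ), (r - (n:ℝ)*δ) ^ (-α) := by
      apply intervalIntegral.integral_congr_ae' hae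
      filter_upwards with x hx
      exact absurd hx (by simp [Ioc_eq_empty_of_le hle] )
    rw [hcongr,
      intervalIntegral.integral_comp_sub_right (a := (n:ℝ)*δ) (b := ((n:ℝ)+1)*δ)
        (fun x : ℝ => x ^ (-α)) ((n:ℝ)*δ)]
    have e1 : (n:ℝ)*δ - (n:ℝ)*δ = 0 := by ring
    have e2 : ((n:ℝ)+1)*δ - (n:ℝ)*δ = δ := by ring
    rw [e1, e2, integral_rpow (Or.inl (by linarith))]
    rw [Real.zero_rpow (by linarith : -α + 1 ≠ 0)]
    norm_num
    rw [show -α + 1 = 1 - α by ring]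

/-- For `α ∈ (0,1)` and `λ > 0` there is `C = C(α,λ,T)` such that for every partition with
mesh `δ = T/N`, `∫_0^T ∫_0^{t_r} (u − t_u)^λ (r−u)^{−α−1} du dr ≤ C δ^{λ−α}`. -/
theorem stmt_5 (α lam T : ℝ) (hα0 : 0 < α) (hα1 : α < 1) (hlam : 0 < lam) (hT : 0 < T) :
    ∃ C : ℝ, 0 < C ∧ ∀ N : ℕ, 0 < N →
      (∫ r in (0:ℝ)..T, ∫ u in (0:ℝ)..tgrid (T / N) r,
          (u - tgrid (T / N) u) ^ lam * (r - u) ^ (-α - 1))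
        ≤ C * (T / N) ^ (lam - α) := by
  have h1α : 0 < 1 - α := by linarith
  have hC : 0 < T / (α * (1 - α)) := div_pos hT (mul_pos hα0 h1α)
  refine ⟨T / (α * (1 - α)), hC, fun N hN => ?_⟩
  set δ := T / (N : ℝ) with hδdef
  have hNpos : (0:ℝ) < N := by exact_mod_cast hN
  have hδ : 0 < δ := div_pos hT hNpos
  have hNδ : (N : ℝ) * δ = T := by rw [hδdef]; field_simp
  have hRHSpos : 0 < T / (α * (1 - α)) * δ ^ (lam - α) :=
    mul_pos hC (rpow_pos_of_pos hδ _)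
  -- the grid-point piecewise function g
  set g : ℝ → ℝ := fun r => (r - tgrid δ r) ^ (-α) with hg
  have hpieces : ∀ k : ℕ, k < N →
      IntervalIntegrable g volume ((k:ℝ)*δ) (((k:ℕ)+1 : ℕ)*δ) := by
    intro k _
    have := (piece hα0 hα1 hδ k).1
    convert this using 2
    push_cast; ring
  have hgT : IntervalIntegrable g volume 0 T := by
    have := IntervalIntegrable.trans_iterate (a := fun k : ℕ => (k:ℝ)*δ) (n := N)
      (f := g) (μ := volume) (fun k hk => hpieces k hk)
    simpa [hNδ] using this
  have hgval : (∫ r in (0:ℝ)..T, g r) = (N:ℝ) * (δ ^ (1-α) / (1-α)) := by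
    have hsum := intervalIntegral.sum_integral_adjacent_intervals
      (a := fun k : ℕ => (k:ℝ)*δ) (n := N) (f := g) (μ := volume)
      (fun k hk => hpieces k hk)
    have : ∀ k ∈ Finset.range N,
        (∫ r in ((k:ℝ)*δ)..(((k:ℕ)+1 : ℕ)*δ), g r) = δ ^ (1-α) / (1-α) := by
      intro k _
      have := (piece hα0 hα1 hδ k).2
      convert this using 2
      push_cast; ring
    rw [Finset.sum_congr rfl this] at hsum
    simp only [Finset.sum_const, Finset.card_range, nsmul_eq_mul, Nat.cast_zero,
      zero_mul, hNδ] at hsum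
    exact hsum.symm
  -- outer function F
  by_cases hF : IntervalIntegrable
      (fun r => ∫ u in (0:ℝ)..tgrid δ r, (u - tgrid δ u) ^ lam * (r - u) ^ (-α - 1))
      volume 0 T
  · have hGint : IntervalIntegrable (fun r => δ ^ lam * g r / α) volume 0 T :=
      (hgT.const_mul _).div_const _
    have haeb : (fun r => ∫ u in (0:ℝ)..tgrid δ r,
          (u - tgrid δ u) ^ lam * (r - u) ^ (-α - 1))
        ≤ᵐ[volume.restrict (Icc 0 T)] fun r => δ ^ lam * g r / α := by
      have hnull : ∀ᵐ r ∂(volume : Measure ℝ), r ∉ Set.range (fun k : ℤ => δ * (k:ℝ)) := by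
        refine ae_iff.2 ?_
        have hcnt : (Set.range (fun k : ℤ => δ * (k:ℝ))).Countable := Set.countable_range _
        have : {r : ℝ | ¬ r ∉ Set.range (fun k : ℤ => δ * (k:ℝ))}
            = Set.range (fun k : ℤ => δ * (k:ℝ)) := by ext x; simp
        rw [this]; exact hcnt.measure_zero _
      filter_upwards [ae_restrict_mem measurableSet_Icc, ae_restrict_of_ae hnull]
        with r hr hrS
      have hle : tgrid δ r ≤ r := tgrid_le hδ r
      have hne : tgrid δ r ≠ r := by
        intro h
        exact hrS ⟨⌊r / δ⌋, h⟩
      exact inner_bound hα0 hlam hδ hr.1 (lt_of_le_of_ne hle hne)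
    have hmono := intervalIntegral.integral_mono_ae_restrict hT.le hF hGint haeb
    refine hmono.trans ?_
    have : (∫ r in (0:ℝ)..T, δ ^ lam * g r / α) = δ ^ lam * (∫ r in (0:ℝ)..T, g r) / α := by
      have e : ∀ r, δ ^ lam * g r / α = δ ^ lam / α * g r := fun r => by ring
      simp_rw [e]
      rw [intervalIntegral.integral_const_mul]
      ring
    rw [this, hgval]
    -- arithmetic
    have key : δ ^ lam * δ ^ (1 - α) = δ * δ ^ (lam - α) := by
      rw [← Real.rpow_add hδ, show lam + (1 - α) = 1 + (lam - α) by ring,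
        Real.rpow_add hδ, Real.rpow_one]
    have heq : δ ^ lam * ((N:ℝ) * (δ ^ (1-α) / (1-α))) / α
        = T / (α * (1 - α)) * δ ^ (lam - α) := by
      rw [← hNδ]
      rw [show δ ^ lam * ((N:ℝ) * (δ ^ (1-α) / (1-α))) / α
          = (N:ℝ) * (δ ^ lam * δ ^ (1-α)) / (α * (1-α)) by rw [← div_div]; ring, key]
      ring
    rw [heq]
  · rw [intervalIntegral.integral_undef hF]
    exact hRHSpos.le
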